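/- Let ℤ act on ℝ × [−1,1] by n · (θ, z) = (θ + nπ, (−1)ⁿ z), let M be the quotient topological space and p : ℝ × [−1,1] → M the quotient map. There is no pair (T, v) with T > 3π and v : [0,T] → [−1,1] continuous such that |v(0)| = 1, |v(T)| = 1, |v(θ)| < 1 for all θ ∈ (0,T), and the map θ ↦ p(θ, v(θ)) is injective on [0,T]. -/

import Mathlib

/-- The relation on the strip `ℝ × [-1,1]` induced by the ℤ-action
`n • (θ, z) = (θ + nπ, (-1)ⁿ z)`: two points are related iff one is in the
ℤ-orbit of the other. -/
def mobiusRel (x y : ℝ × (Set.Icc (-1 : ℝ) 1)) : Prop :=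
  ∃ n : ℤ, y.1 = x.1 + n * Real.pi ∧ (y.2 : ℝ) = (-1 : ℝ) ^ n * (x.2 : ℝ)

/-- The Möbius band, as the quotient of the strip `ℝ × [-1,1]` by the ℤ-action. -/
def MobiusBand : Type := Quot mobiusRel

/-- The quotient map `p : ℝ × [-1,1] → M`. -/
def mobiusProj : ℝ × (Set.Icc (-1 : ℝ) 1) → MobiusBand := Quot.mk mobiusRel

/-- There is no pair `(T, v)` with `T > 3π` and `v : [0,T] → [-1,1]` continuous such that
`|v 0| = 1`, `|v T| = 1`, `|v θ| < 1` on `(0,T)`, and `θ ↦ p (θ, v θ)` is injective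
on `[0,T]`. -/
theorem stmt5 :
    ¬ ∃ (T : ℝ) (v : ℝ → ℝ),
      3 * Real.pi < T ∧
      ContinuousOn v (Set.Icc (0 : ℝ) T) ∧
      (∀ θ ∈ Set.Icc (0 : ℝ) T, v θ ∈ Set.Icc (-1 : ℝ) 1) ∧
      |v 0| = 1 ∧
      |v T| = 1 ∧
      (∀ θ ∈ Set.Ioo (0 : ℝ) T, |v θ| < 1) ∧
      (∀ θ₁ ∈ Set.Icc (0 : ℝ) T, ∀ θ₂ ∈ Set.Icc (0 : ℝ) T,
        ∀ z₁ z₂ : Set.Icc (-1 : ℝ) 1, (z₁ : ℝ) = v θ₁ → (z₂ : ℝ) = v θ₂ →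
          mobiusProj (θ₁, z₁) = mobiusProj (θ₂, z₂) → θ₁ = θ₂) := by
  rintro ⟨T, v, hT, hvc, hmem, h0, hTv, hint, hinj⟩
  have hπ := Real.pi_pos
  -- Key consequence of injectivity: no θ with v(θ + nπ) = (-1)^n v(θ) for n ≥ 1.
  have key : ∀ (n : ℕ), 0 < n → ∀ θ, θ ∈ Set.Icc (0:ℝ) T →
      θ + (n:ℝ) * Real.pi ∈ Set.Icc (0:ℝ) T →
      v (θ + (n:ℝ) * Real.pi) = (-1:ℝ)^n * v θ → False := by
    intro n hn θ hθ hθn hveq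
    have hz1 := hmem θ hθ
    have hz2 := hmem _ hθn
    have heq : mobiusProj (θ, ⟨v θ, hz1⟩) =
        mobiusProj (θ + (n:ℝ) * Real.pi, ⟨v (θ + (n:ℝ)*Real.pi), hz2⟩) := by
      apply Quot.sound
      refine ⟨(n:ℤ), by push_cast; ring, ?_⟩
      show v (θ + (n:ℝ)*Real.pi) = (-1:ℝ) ^ (n:ℤ) * v θ
      rw [zpow_natCast]; exact hveq
    have h := hinj θ hθ (θ + (n:ℝ) * Real.pi) hθn ⟨v θ, hz1⟩ ⟨_, hz2⟩ rfl rfl heq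
    have hnp : (0:ℝ) < (n:ℝ) * Real.pi :=
      mul_pos (by exact_mod_cast hn) hπ
    linarith
  -- IVT wrapper
  have ivt : ∀ (f : ℝ → ℝ) (a b : ℝ), a ≤ b → ContinuousOn f (Set.Icc a b) →
      f a * f b ≤ 0 → ∃ c ∈ Set.Icc a b, f c = 0 := by
    intro f a b hab hf hprod
    rcases le_total (f a) 0 with ha | ha
    · rcases le_total 0 (f b) with hb | hb
      · obtain ⟨c, hc, hfc⟩ := intermediate_value_Icc hab hf ⟨ha, hb⟩
        exact ⟨c, hc, hfc⟩
      · have h2 : 0 ≤ f a * f b := by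
          have := mul_nonneg (neg_nonneg.mpr ha) (neg_nonneg.mpr hb)
          rwa [neg_mul_neg] at this
        rcases mul_eq_zero.mp (le_antisymm hprod h2) with h | h
        exacts [⟨a, Set.left_mem_Icc.mpr hab, h⟩, ⟨b, Set.right_mem_Icc.mpr hab, h⟩]
    · rcases le_total (f b) 0 with hb | hb
      · obtain ⟨c, hc, hfc⟩ := intermediate_value_Icc' hab hf ⟨hb, ha⟩
        exact ⟨c, hc, hfc⟩
      · rcases mul_eq_zero.mp (le_antisymm hprod (mul_nonneg ha hb)) with h | h
        exacts [⟨a, Set.left_mem_Icc.mpr hab, h⟩, ⟨b, Set.right_mem_Icc.mpr hab, h⟩]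
  -- Combined contradiction lemma from a sign condition
  have contra : ∀ n : ℕ, 0 < n → (n:ℝ) * Real.pi ≤ T →
      (v ((n:ℝ)*Real.pi) - (-1:ℝ)^n * v 0) *
        (v T - (-1:ℝ)^n * v (T - (n:ℝ)*Real.pi)) ≤ 0 → False := by
    intro n hn hnT hsign
    have hnπ : (0:ℝ) ≤ (n:ℝ) * Real.pi := mul_nonneg (Nat.cast_nonneg n) hπ.le
    set f : ℝ → ℝ := fun s => v (s + (n:ℝ) * Real.pi) - (-1:ℝ)^n * v s with hfdef
    have hab : (0:ℝ) ≤ T - (n:ℝ)*Real.pi := by linarith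
    have hcont : ContinuousOn f (Set.Icc 0 (T - (n:ℝ)*Real.pi)) := by
      apply ContinuousOn.sub
      · apply hvc.comp ((continuous_id.add continuous_const).continuousOn)
        intro s hs
        simp only [Set.mem_Icc, Pi.add_apply, id_eq] at hs ⊢
        constructor <;> linarith [hs.1, hs.2, hnπ]
      · exact continuousOn_const.mul (hvc.mono (Set.Icc_subset_Icc le_rfl (by linarith)))
    have hsign' : f 0 * f (T - (n:ℝ)*Real.pi) ≤ 0 := by
      simp only [hfdef, zero_add, sub_add_cancel]
      exact hsign
    obtain ⟨c, hc, hfc⟩ := ivt f 0 (T - (n:ℝ)*Real.pi) hab hcont hsign'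
    have hveq : v (c + (n:ℝ)*Real.pi) = (-1:ℝ)^n * v c := by
      have := hfc
      simp only [hfdef] at this
      linarith
    exact key n hn c ⟨hc.1, by linarith [hc.2]⟩ ⟨by linarith [hc.1], by linarith [hc.2]⟩ hveq
  -- interior bounds
  have hI1 := abs_lt.mp (hint Real.pi ⟨hπ, by linarith⟩)
  have hI2 := abs_lt.mp (hint (2*Real.pi) ⟨by linarith, by linarith⟩)
  have hJ1 := abs_lt.mp (hint (T - Real.pi) ⟨by linarith, by linarith⟩)
  have hJ2 := abs_lt.mp (hint (T - 2*Real.pi) ⟨by linarith, by linarith⟩)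
  rcases (abs_eq (by norm_num : (0:ℝ) ≤ 1)).mp h0 with h0' | h0' <;>
    rcases (abs_eq (by norm_num : (0:ℝ) ≤ 1)).mp hTv with hT' | hT'
  · -- v 0 = 1, v T = 1 : use n = 2
    apply contra 2 (by norm_num) (by push_cast; linarith)
    push_cast
    rw [h0', hT']
    norm_num
    nlinarith [hI2.1, hI2.2, hJ2.1, hJ2.2]
  · -- v 0 = 1, v T = -1 : use n = 1
    apply contra 1 (by norm_num) (by push_cast; linarith)
    push_cast
    rw [h0', hT']
    norm_num
    nlinarith [hI1.1, hI1.2, hJ1.1, hJ1.2]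
  · -- v 0 = -1, v T = 1 : use n = 1
    apply contra 1 (by norm_num) (by push_cast; linarith)
    push_cast
    rw [h0', hT']
    norm_num
    nlinarith [hI1.1, hI1.2, hJ1.1, hJ1.2]
  · -- v 0 = -1, v T = -1 : use n = 2
    apply contra 2 (by norm_num) (by push_cast; linarith)
    push_cast
    rw [h0', hT']
    norm_num
    nlinarith [hI2.1, hI2.2, hJ2.1, hJ2.2]
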